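/- Suppose G_0, G_1, G_2, G_3 are graphs whose edge sets partition E(K_n). Then for each i ∈ {1,2,3}, f_2(G_0 ∪ G_1) + f_2(G_0 ∪ G_2) + f_2(G_0 ∪ G_3) + f_2(G_i) ≥ n - 1. -/

import Mathlib

open Finset

/-- Edge set of the complete bipartite graph with parts `A` and `B`. -/
def bicliqueEdges {V : Type*} (A B : Finset V) : Set (Sym2 V) :=
  {e | ∃ a ∈ A, ∃ b ∈ B, e = s(a, b)}

/-- `f_2(G)`: minimum number of complete bipartite subgraphs needed to partition
the edge set of the graph `G`. -/
noncomputable def f2 {V : Type*} (G : SimpleGraph V) : ℕ :=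
  sInf {m | ∃ A B : Fin m → Finset V,
    (∀ k, Disjoint (A k) (B k)) ∧
    (∀ k, bicliqueEdges (A k) (B k) ⊆ G.edgeSet) ∧
    ∀ e ∈ G.edgeSet, ∃! k, e ∈ bicliqueEdges (A k) (B k)}

/-- Edge set of the complete `r`-partite `r`-uniform hypergraph with parts `P`. -/
def crossEdges {V : Type*} [DecidableEq V] {r : ℕ} (P : Fin r → Finset V) : Set (Finset V) :=
  {e | ∃ f : Fin r → V, (∀ i, f i ∈ P i) ∧ e = Finset.image f Finset.univ}

/-- `f_r(n)`: minimum number of complete `r`-partite `r`-uniform hypergraphs needed to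
partition the edge set of the complete `r`-uniform hypergraph on `n` vertices. -/
noncomputable def fr (r n : ℕ) : ℕ :=
  sInf {m | ∃ P : Fin m → Fin r → Finset (Fin n),
    (∀ k, Pairwise (Function.onFun Disjoint (P k))) ∧
    ∀ e : Finset (Fin n), e.card = r → ∃! k, e ∈ crossEdges (P k)}

/-- `g(G,H)`: minimum number of blocks (products of edge sets of complete
bipartite subgraphs of `G` and `H` respectively) needed to partition `E(G) × E(H)`. -/
noncomputable def gGH {V W : Type*} (G : SimpleGraph V) (H : SimpleGraph W) : ℕ :=
  sInf {m | ∃ A B : Fin m → Finset V, ∃ C D : Fin m → Finset W,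
    (∀ k, Disjoint (A k) (B k)) ∧ (∀ k, Disjoint (C k) (D k)) ∧
    (∀ k, bicliqueEdges (A k) (B k) ⊆ G.edgeSet) ∧
    (∀ k, bicliqueEdges (C k) (D k) ⊆ H.edgeSet) ∧
    ∀ p : Sym2 V × Sym2 W, p.1 ∈ G.edgeSet → p.2 ∈ H.edgeSet →
      ∃! k, p.1 ∈ bicliqueEdges (A k) (B k) ∧ p.2 ∈ bicliqueEdges (C k) (D k)}

/-- `g(n) = g(K_n, K_n)`. -/
noncomputable def gn (n : ℕ) : ℕ :=
  gGH (SimpleGraph.completeGraph (Fin n)) (SimpleGraph.completeGraph (Fin n))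


lemma core {n : ℕ} {ι : Type} [Fintype ι] (A B : ι → Finset (Fin n)) (w : ι → ℚ)
    (hdisj : ∀ k, Disjoint (A k) (B k))
    (hcov : ∀ u v : Fin n, u ≠ v →
      ∑ k, w k * ((if u ∈ A k then (1:ℚ) else 0) * (if v ∈ B k then 1 else 0)
        + (if v ∈ A k then (1:ℚ) else 0) * (if u ∈ B k then 1 else 0)) = 1) :
    n - 1 ≤ Fintype.card ι := by
  by_contra hlt
  push_neg at hlt
  set N := Fintype.card ι with hN
  have hdim : N + 1 < n := by omega
  let φ : (Fin n → ℚ) →ₗ[ℚ] (ι → ℚ) × ℚ :=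
    { toFun := fun x => (fun k => ∑ a ∈ A k, x a, ∑ v, x v)
      map_add' := by intro x y; ext k <;> simp [Finset.sum_add_distrib]
      map_smul' := by intro c x; ext k <;> simp [Finset.mul_sum] }
  have hninj : ¬ Function.Injective φ := by
    intro hinj
    have := LinearMap.finrank_le_finrank_of_injective hinj
    simp only [Module.finrank_prod, Module.finrank_pi, Module.finrank_self,
      Fintype.card_fin] at this
    omega
  rw [Function.not_injective_iff] at hninj
  obtain ⟨a, b, hab, hne⟩ := hninj
  set x : Fin n → ℚ := a - b with hx
  have hφx : φ x = 0 := by rw [hx, map_sub, hab, sub_self]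
  have keyA : ∀ k, ∑ a ∈ A k, x a = 0 := by
    intro k; have := congrArg (fun p => p.1 k) hφx; simpa [φ] using this
  have keyS : ∑ v, x v = 0 := by
    have := congrArg (fun p => p.2) hφx; simpa [φ] using this
  have hxne : x ≠ 0 := sub_ne_zero_of_ne hne
  have hS : ∀ (S : Finset (Fin n)), (∑ a ∈ S, x a)
      = ∑ u : Fin n, (if u ∈ S then (1:ℚ) else 0) * x u := by
    intro S; simp [ite_mul, Finset.sum_ite_mem]
  have expand : ∀ (S T : Finset (Fin n)), (∑ a ∈ S, x a) * (∑ b ∈ T, x b)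
      = ∑ u : Fin n, ∑ v : Fin n,
        ((if u ∈ S then (1:ℚ) else 0) * (if v ∈ T then 1 else 0)) * (x u * x v) := by
    intro S T
    rw [hS S, hS T, Finset.sum_mul_sum]
    apply Finset.sum_congr rfl; intro u _
    apply Finset.sum_congr rfl; intro v _
    ring
  have main : (0:ℚ) = ∑ u : Fin n, ∑ v : Fin n,
      (if u = v then (0:ℚ) else 1) * (x u * x v) := by
    have h0 : (0:ℚ) = ∑ k, w k * ((∑ a ∈ A k, x a) * (∑ b ∈ B k, x b)
        + (∑ a ∈ B k, x a) * (∑ b ∈ A k, x b)) := by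
      symm; apply Finset.sum_eq_zero; intro k _
      rw [keyA k]; ring
    have step : ∀ k, w k * ((∑ a ∈ A k, x a) * (∑ b ∈ B k, x b)
        + (∑ a ∈ B k, x a) * (∑ b ∈ A k, x b))
        = ∑ u : Fin n, ∑ v : Fin n,
          (w k * ((if u ∈ A k then (1:ℚ) else 0) * (if v ∈ B k then 1 else 0)
            + (if u ∈ B k then (1:ℚ) else 0) * (if v ∈ A k then 1 else 0))) * (x u * x v) := by
      intro k
      rw [expand (A k) (B k), expand (B k) (A k), ← Finset.sum_add_distrib]
      rw [Finset.mul_sum]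
      apply Finset.sum_congr rfl; intro u _
      rw [← Finset.sum_add_distrib, Finset.mul_sum]
      apply Finset.sum_congr rfl; intro v _
      ring
    have key : ∀ u v : Fin n, (∑ k, w k * ((if u ∈ A k then (1:ℚ) else 0) * (if v ∈ B k then 1 else 0)
        + (if u ∈ B k then (1:ℚ) else 0) * (if v ∈ A k then 1 else 0)))
        = (if u = v then (0:ℚ) else 1) := by
      intro u v
      by_cases huv : u = v
      · subst huv
        rw [if_pos rfl]
        apply Finset.sum_eq_zero; intro k _
        have h1 : ¬ (u ∈ A k ∧ u ∈ B k) := fun ⟨h1, h2⟩ =>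
          (Finset.disjoint_left.mp (hdisj k)) h1 h2
        by_cases hA : u ∈ A k <;> by_cases hB : u ∈ B k <;> simp [hA, hB] at h1 ⊢
      · rw [if_neg huv]
        refine Eq.trans ?_ (hcov u v huv)
        apply Finset.sum_congr rfl; intro k _; ring
    calc (0:ℚ) = ∑ k, w k * ((∑ a ∈ A k, x a) * (∑ b ∈ B k, x b)
          + (∑ a ∈ B k, x a) * (∑ b ∈ A k, x b)) := h0
      _ = ∑ k, ∑ u : Fin n, ∑ v : Fin n,
          (w k * ((if u ∈ A k then (1:ℚ) else 0) * (if v ∈ B k then 1 else 0)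
            + (if u ∈ B k then (1:ℚ) else 0) * (if v ∈ A k then 1 else 0))) * (x u * x v) :=
        Finset.sum_congr rfl (fun k _ => step k)
      _ = ∑ u : Fin n, ∑ k, ∑ v : Fin n,
          (w k * ((if u ∈ A k then (1:ℚ) else 0) * (if v ∈ B k then 1 else 0)
            + (if u ∈ B k then (1:ℚ) else 0) * (if v ∈ A k then 1 else 0))) * (x u * x v) :=
        Finset.sum_comm
      _ = ∑ u : Fin n, ∑ v : Fin n, ∑ k,
          (w k * ((if u ∈ A k then (1:ℚ) else 0) * (if v ∈ B k then 1 else 0)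
            + (if u ∈ B k then (1:ℚ) else 0) * (if v ∈ A k then 1 else 0))) * (x u * x v) :=
        Finset.sum_congr rfl (fun u _ => Finset.sum_comm)
      _ = ∑ u : Fin n, ∑ v : Fin n, (if u = v then (0:ℚ) else 1) * (x u * x v) := by
        refine Finset.sum_congr rfl fun u _ => Finset.sum_congr rfl fun v _ => ?_
        rw [← Finset.sum_mul, key u v]
  -- now derive contradiction
  have hrhs : ∑ u : Fin n, ∑ v : Fin n, (if u = v then (0:ℚ) else 1) * (x u * x v)
      = - ∑ u : Fin n, x u * x u := by
    have : ∀ u : Fin n, ∑ v : Fin n, (if u = v then (0:ℚ) else 1) * (x u * x v)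
        = x u * (∑ v, x v) - x u * x u := by
      intro u
      have : ∀ v : Fin n, (if u = v then (0:ℚ) else 1) * (x u * x v)
          = x u * x v - (if u = v then x u * x v else 0) := by
        intro v; split_ifs <;> ring
      rw [Finset.sum_congr rfl (fun v _ => this v), Finset.sum_sub_distrib,
        Finset.sum_ite_eq, if_pos (Finset.mem_univ u), Finset.mul_sum]
    rw [Finset.sum_congr rfl (fun u _ => this u), Finset.sum_sub_distrib]
    simp [keyS]
  rw [hrhs] at main
  have hsum0 : ∑ u : Fin n, x u * x u = 0 := by linarith
  have : ∀ u : Fin n, x u = 0 := by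
    intro u
    have hnn : ∀ u ∈ Finset.univ, (0:ℚ) ≤ x u * x u := fun u _ => mul_self_nonneg (x u)
    have := (Finset.sum_eq_zero_iff_of_nonneg hnn).mp hsum0 u (Finset.mem_univ u)
    exact mul_self_eq_zero.mp this
  exact hxne (funext this)

lemma mem_biclique_singleton {V : Type*} {u v : V} {e : Sym2 V} :
    e ∈ bicliqueEdges {u} {v} ↔ e = s(u, v) := by
  simp [bicliqueEdges]

lemma sym2_rep {V : Type*} (z : Sym2 V) : ∃ x y, z = s(x, y) := by
  induction z using Sym2.ind with
  | _ x y => exact ⟨x, y, rfl⟩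

lemma f2_spec {n : ℕ} (G : SimpleGraph (Fin n)) :
    ∃ A B : Fin (f2 G) → Finset (Fin n),
      (∀ k, Disjoint (A k) (B k)) ∧
      (∀ k, bicliqueEdges (A k) (B k) ⊆ G.edgeSet) ∧
      ∀ e ∈ G.edgeSet, ∃! k, e ∈ bicliqueEdges (A k) (B k) := by
  classical
  have hne : {m | ∃ A B : Fin m → Finset (Fin n),
      (∀ k, Disjoint (A k) (B k)) ∧
      (∀ k, bicliqueEdges (A k) (B k) ⊆ G.edgeSet) ∧
      ∀ e ∈ G.edgeSet, ∃! k, e ∈ bicliqueEdges (A k) (B k)}.Nonempty := by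
    set E : Finset (Sym2 (Fin n)) := G.edgeSet.toFinite.toFinset with hE
    refine ⟨E.card, ?_⟩
    set ε : Fin E.card → Sym2 (Fin n) := fun k => (E.equivFin.symm k : Sym2 (Fin n)) with hε
    have hεinj : Function.Injective ε := fun a b h => by
      have := Subtype.ext h
      simpa using E.equivFin.symm.injective this
    have hεmem : ∀ k, ε k ∈ G.edgeSet := fun k =>
      (Set.Finite.mem_toFinset _).mp (E.equivFin.symm k).2
    choose u v huv using fun k => sym2_rep (ε k)
    refine ⟨fun k => {u k}, fun k => {v k}, ?_, ?_, ?_⟩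
    · intro k
      have : G.Adj (u k) (v k) := by
        have := hεmem k; rwa [huv k, SimpleGraph.mem_edgeSet] at this
      exact Finset.disjoint_singleton.mpr this.ne
    · intro k e he
      rw [mem_biclique_singleton] at he
      rw [he, ← huv k]; exact hεmem k
    · intro e he
      have heE : e ∈ E := by rw [hE, Set.Finite.mem_toFinset]; exact he
      refine ⟨E.equivFin ⟨e, heE⟩, ?_, ?_⟩
      · dsimp only
        rw [mem_biclique_singleton, ← huv]
        simp [ε]
      · intro k hk
        dsimp only at hk
        rw [mem_biclique_singleton, ← huv] at hk
        apply hεinj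
        rw [← hk]
        simp [ε]
  exact Nat.sInf_mem hne

lemma mem_biclique_iff {V : Type*} {A B : Finset V} {u v : V} :
    s(u, v) ∈ bicliqueEdges A B ↔ (u ∈ A ∧ v ∈ B) ∨ (v ∈ A ∧ u ∈ B) := by
  constructor
  · rintro ⟨a, ha, b, hb, h⟩
    rw [Sym2.eq_iff] at h
    rcases h with ⟨rfl, rfl⟩ | ⟨rfl, rfl⟩
    · exact Or.inl ⟨ha, hb⟩
    · exact Or.inr ⟨ha, hb⟩
  · rintro (⟨h1, h2⟩ | ⟨h1, h2⟩)
    · exact ⟨u, h1, v, h2, rfl⟩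
    · exact ⟨v, h1, u, h2, Sym2.eq_swap.symm⟩

open scoped Classical in
lemma partSum {n m : ℕ} (H : SimpleGraph (Fin n)) (A B : Fin m → Finset (Fin n))
    (hdisj : ∀ k, Disjoint (A k) (B k))
    (hsub : ∀ k, bicliqueEdges (A k) (B k) ⊆ H.edgeSet)
    (hcov : ∀ e ∈ H.edgeSet, ∃! k, e ∈ bicliqueEdges (A k) (B k))
    (u v : Fin n) :
    ∑ k, ((if u ∈ A k then (1:ℚ) else 0) * (if v ∈ B k then 1 else 0)
      + (if v ∈ A k then (1:ℚ) else 0) * (if u ∈ B k then 1 else 0))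
    = if s(u, v) ∈ H.edgeSet then 1 else 0 := by
  classical
  have hterm : ∀ k, ((if u ∈ A k then (1:ℚ) else 0) * (if v ∈ B k then 1 else 0)
      + (if v ∈ A k then (1:ℚ) else 0) * (if u ∈ B k then 1 else 0))
      = if s(u, v) ∈ bicliqueEdges (A k) (B k) then (1:ℚ) else 0 := by
    intro k
    have hAB := Finset.disjoint_left.mp (hdisj k)
    rw [show (s(u, v) ∈ bicliqueEdges (A k) (B k)) = ((u ∈ A k ∧ v ∈ B k) ∨ (v ∈ A k ∧ u ∈ B k))
      from propext mem_biclique_iff]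
    by_cases h1 : u ∈ A k <;> by_cases h2 : v ∈ B k <;> by_cases h3 : v ∈ A k
      <;> by_cases h4 : u ∈ B k <;> first
      | (exact absurd (hAB h1 h4) (by simp))
      | simp [h1, h2, h3, h4]
  rw [Finset.sum_congr rfl (fun k _ => hterm k)]
  by_cases he : s(u, v) ∈ H.edgeSet
  · rw [if_pos he]
    obtain ⟨k0, hk0, huniq⟩ := hcov _ he
    rw [Finset.sum_eq_single_of_mem k0 (Finset.mem_univ _)]
    · rw [if_pos hk0]
    · intro k _ hkne
      rw [if_neg (fun hc => hkne (huniq k hc))]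
  · rw [if_neg he]
    apply Finset.sum_eq_zero
    intro k _
    rw [if_neg (fun hc => he (hsub k hc))]

theorem stmt11 (n : ℕ) (G : Fin 4 → SimpleGraph (Fin n))
    (hpart : ∀ e ∈ (SimpleGraph.completeGraph (Fin n)).edgeSet, ∃! t, e ∈ (G t).edgeSet)
    (i : Fin 4) (hi : i ≠ 0) :
    n - 1 ≤ f2 (G 0 ⊔ G 1) + f2 (G 0 ⊔ G 2) + f2 (G 0 ⊔ G 3) + f2 (G i) := by
  classical
  obtain ⟨A1, B1, hd1, hs1, hc1⟩ := f2_spec (G 0 ⊔ G 1)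
  obtain ⟨A2, B2, hd2, hs2, hc2⟩ := f2_spec (G 0 ⊔ G 2)
  obtain ⟨A3, B3, hd3, hs3, hc3⟩ := f2_spec (G 0 ⊔ G 3)
  obtain ⟨A4, B4, hd4, hs4, hc4⟩ := f2_spec (G i)
  set ι : Type := (Fin (f2 (G 0 ⊔ G 1)) ⊕ Fin (f2 (G 0 ⊔ G 2)))
      ⊕ (Fin (f2 (G 0 ⊔ G 3)) ⊕ Fin (f2 (G i))) with hι
  let A : ι → Finset (Fin n) := Sum.elim (Sum.elim A1 A2) (Sum.elim A3 A4)
  let B : ι → Finset (Fin n) := Sum.elim (Sum.elim B1 B2) (Sum.elim B3 B4)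
  let c : Fin 4 → ℚ := fun j => if j = i then -1 else 1
  let w : ι → ℚ := Sum.elim (Sum.elim (fun _ => c 1) (fun _ => c 2))
      (Sum.elim (fun _ => c 3) (fun _ => (2:ℚ)))
  have hdisj : ∀ k : ι, Disjoint (A k) (B k) := by
    rintro ((k | k) | (k | k)) <;> [exact hd1 k; exact hd2 k; exact hd3 k; exact hd4 k]
  have hcov : ∀ u v : Fin n, u ≠ v →
      ∑ k : ι, w k * ((if u ∈ A k then (1:ℚ) else 0) * (if v ∈ B k then 1 else 0)
        + (if v ∈ A k then (1:ℚ) else 0) * (if u ∈ B k then 1 else 0)) = 1 := by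
    intro u v huv
    have he : s(u, v) ∈ (SimpleGraph.completeGraph (Fin n)).edgeSet := by
      simp [SimpleGraph.completeGraph, huv]
    obtain ⟨t, ht, huniq⟩ := hpart _ he
    have key : ∀ s : Fin 4, s(u, v) ∈ (G s).edgeSet ↔ s = t :=
      fun s => ⟨fun h => huniq s h, fun h => h ▸ ht⟩
    rw [Fintype.sum_sum_type, Fintype.sum_sum_type, Fintype.sum_sum_type]
    simp only [Sum.elim_inl, Sum.elim_inr, A, B, w]
    rw [← Finset.mul_sum, ← Finset.mul_sum, ← Finset.mul_sum, ← Finset.mul_sum]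
    erw [partSum _ A1 B1 hd1 hs1 hc1 u v, partSum _ A2 B2 hd2 hs2 hc2 u v,
      partSum _ A3 B3 hd3 hs3 hc3 u v, partSum _ A4 B4 hd4 hs4 hc4 u v]
    simp only [SimpleGraph.edgeSet_sup, Set.mem_union, key, c]
    fin_cases i
    · exact absurd rfl hi
    all_goals fin_cases t <;> norm_num [Fin.ext_iff] <;> simp [show ((3:Fin 4) : ℕ) = 3 from rfl] <;> norm_num
  have hcore := core A B w hdisj hcov
  have hcard : Fintype.card ι
      = f2 (G 0 ⊔ G 1) + f2 (G 0 ⊔ G 2) + (f2 (G 0 ⊔ G 3) + f2 (G i)) := by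
    simp [hι, Fintype.card_sum]
  omega
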